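/- Let G be a finite group and χ₁, …, χ_n irreducible characters of G with χ₁(1) = max_i χ_i(1). Then ⟨χ₁χ₂⋯χ_n, χ₁χ₂⋯χ_n⟩ ≤ χ₂(1)²⋯χ_n(1)², where ⟨·,·⟩ is the usual inner product of class functions. -/

import Mathlib

open scoped BigOperators

/-- `f : G → ℂ` is the character of some finite-dimensional complex representation of `G`. -/
def IsChar (G : Type) [Group G] (f : G → ℂ) : Prop :=
  ∃ V : FDRep ℂ G, V.character = f

/-- `f : G → ℂ` is the character of an irreducible finite-dimensional complex
representation of `G`. -/
def IsIrrChar (G : Type) [Group G] (f : G → ℂ) : Prop :=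
  ∃ V : FDRep ℂ G, CategoryTheory.Simple V ∧ V.character = f

/-- The standard inner product of class functions on a finite group. -/
noncomputable def cInner (G : Type) [Group G] [Fintype G] (f g : G → ℂ) : ℂ :=
  (Fintype.card G : ℂ)⁻¹ * ∑ x : G, f x * (starRingEnd ℂ) (g x)

/-- `|χ|`: the sum of the squares of the degrees of the distinct irreducible
constituents of `χ` (an irreducible character `f` is a constituent of `χ` iff
`⟨χ, f⟩ ≠ 0`). -/
noncomputable def charNorm (G : Type) [Group G] [Fintype G] (χ : G → ℂ) : ℝ :=
  ∑' f : {f : G → ℂ // IsIrrChar G f ∧ cInner G χ f ≠ 0}, Complex.normSq (f.1 1)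

section StmtAux

open Polynomial Matrix

namespace StmtAux

variable {d : ℕ}

lemma eval_charpoly' (A : Matrix (Fin d) (Fin d) ℂ) (x : ℂ) :
    A.charpoly.eval x = (x • (1 : Matrix (Fin d) (Fin d) ℂ) - A).det := by
  rw [Matrix.charpoly, ← Polynomial.coe_evalRingHom, RingHom.map_det]
  congr 1
  ext i j
  by_cases h : i = j <;>
    simp [charmatrix_apply, h, Matrix.one_apply, Matrix.smul_apply, Matrix.diagonal]

lemma root_pow_eq_one {A : Matrix (Fin d) (Fin d) ℂ} {k : ℕ} (hk : k ≠ 0)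
    (hA : A ^ k = 1) {μ : ℂ} (hμ : μ ∈ A.charpoly.roots) : μ ^ k = 1 := by
  rw [mem_roots (A.charpoly_monic.ne_zero)] at hμ
  have hdet : (μ • (1 : Matrix (Fin d) (Fin d) ℂ) - A).det = 0 := by
    rw [← eval_charpoly']; exact hμ
  obtain ⟨v, hv0, hveq⟩ := (Matrix.exists_mulVec_eq_zero_iff).mpr hdet
  have hAv : A.mulVec v = μ • v := by
    have := hveq
    rw [Matrix.sub_mulVec, Matrix.smul_mulVec, Matrix.one_mulVec, sub_eq_zero] at this
    exact this.symm
  have hpow : ∀ m : ℕ, (A ^ m).mulVec v = μ ^ m • v := by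
    intro m
    induction m with
    | zero => simp [Matrix.one_mulVec]
    | succ m ih =>
        rw [pow_succ, ← Matrix.mulVec_mulVec, hAv, Matrix.mulVec_smul, ih, smul_smul,
          pow_succ, mul_comm]
  have hv : v = μ ^ k • v := by
    have := hpow k
    rwa [hA, Matrix.one_mulVec] at this
  obtain ⟨i, hi⟩ := Function.ne_iff.mp hv0
  have : v i = μ ^ k * v i := congrFun hv i
  have h2 : (μ ^ k - 1) * v i = 0 := by ring_nf; linear_combination this.symm
  rcases mul_eq_zero.mp h2 with h | h
  · linear_combination h
  · exact absurd h hi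

lemma card_roots_charpoly (A : Matrix (Fin d) (Fin d) ℂ) :
    Multiset.card A.charpoly.roots = d := by
  rw [(Polynomial.splits_iff_card_roots).mp (IsAlgClosed.splits A.charpoly),
    Matrix.charpoly_natDegree_eq_dim, Fintype.card_fin]

lemma abs_trace_le {A : Matrix (Fin d) (Fin d) ℂ} {k : ℕ} (hk : k ≠ 0) (hA : A ^ k = 1) :
    ‖A.trace‖ ≤ d := by
  rw [A.trace_eq_sum_roots_charpoly]
  have h1 : ∀ μ ∈ A.charpoly.roots, ‖μ‖ = 1 := by
    intro μ hμ
    have := root_pow_eq_one hk hA hμ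
    have habs : ‖μ‖ ^ k = 1 := by
      rw [← norm_pow, this, norm_one]
    exact (pow_left_inj₀ (norm_nonneg μ) zero_le_one hk).mp (by rw [habs, one_pow])
  calc ‖A.charpoly.roots.sum‖ ≤ (A.charpoly.roots.map (fun z => ‖z‖)).sum := by
        exact norm_multiset_sum_le A.charpoly.roots
    _ = d := by
        have : A.charpoly.roots.map (fun z => ‖z‖) = Multiset.replicate d 1 :=
          Multiset.eq_replicate.mpr ⟨by simp [card_roots_charpoly], by
            intro x hx
            obtain ⟨μ, hμ, rfl⟩ := Multiset.mem_map.mp hx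
            exact h1 μ hμ⟩
        simp [this, Multiset.sum_replicate]


lemma conj_trace_eq {A : Matrix (Fin d) (Fin d) ℂ} {k : ℕ} (hk : k ≠ 0) (hA : A ^ k = 1) :
    (starRingEnd ℂ) A.trace = (A ^ (k - 1)).trace := by
  set s := A.charpoly.roots with hs
  have hroot : ∀ μ ∈ s, μ ^ k = 1 := fun μ hμ => root_pow_eq_one hk hA hμ
  have hne : ∀ μ ∈ s, μ ≠ 0 := by
    intro μ hμ h0
    have := hroot μ hμ
    rw [h0, zero_pow hk] at this
    exact zero_ne_one this
  have habs : ∀ μ ∈ s, ‖μ‖ = 1 := by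
    intro μ hμ
    have h1 : ‖μ‖ ^ k = 1 := by
      rw [← norm_pow, hroot μ hμ, norm_one]
    exact (pow_left_inj₀ (norm_nonneg μ) zero_le_one hk).mp (by rw [h1, one_pow])
  have hconj : ∀ μ ∈ s, (starRingEnd ℂ) μ = μ⁻¹ := by
    intro μ hμ
    refine eq_inv_of_mul_eq_one_left ?_
    rw [mul_comm, Complex.mul_conj]
    norm_cast
    rw [Complex.normSq_eq_norm_sq, habs μ hμ, one_pow]
  set B := A ^ (k - 1) with hB
  have hAB : A * B = 1 := by
    rw [hB, ← pow_succ', Nat.sub_add_cancel (Nat.one_le_iff_ne_zero.mpr hk), hA]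
  have hdetA : A.det ≠ 0 := by
    intro h
    have : A.det ^ k = 1 := by rw [← det_pow, hA, det_one]
    rw [h, zero_pow hk] at this
    exact zero_ne_one this
  have hdet_prod : A.det = s.prod := A.det_eq_prod_roots_charpoly
  have hcard : Multiset.card s = d := card_roots_charpoly A
  have hq : B.charpoly = ((s.map (starRingEnd ℂ)).map fun a => X - C a).prod := by
    apply Polynomial.eq_of_infinite_eval_eq
    apply Set.Infinite.mono (s := {x : ℂ | x ≠ 0})
    swap
    · exact (Set.finite_singleton 0).infinite_compl
    intro x hx
    have hx : x ≠ 0 := hx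
    have e1 : A.det * B.charpoly.eval x = (-x) ^ d * A.charpoly.eval x⁻¹ := by
      rw [eval_charpoly', eval_charpoly', ← det_mul, mul_sub, hAB, Matrix.mul_smul, mul_one]
      have h1 : x • A - 1 = (-x) • (x⁻¹ • (1 : Matrix (Fin d) (Fin d) ℂ) - A) := by
        rw [smul_sub, smul_smul, neg_mul, mul_inv_cancel₀ hx, neg_smul, one_smul, neg_smul,
          sub_neg_eq_add]
        abel
      rw [h1, det_smul, Fintype.card_fin]
    have e2 : A.charpoly.eval x⁻¹ = (s.map fun μ => x⁻¹ - μ).prod := by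
      conv_lhs => rw [(IsAlgClosed.splits A.charpoly).eq_prod_roots_of_monic
        A.charpoly_monic]
      rw [eval_multiset_prod, Multiset.map_map]
      simp only [Function.comp, eval_sub, eval_X, eval_C]
      rw [← hs]
    have e3 : (-x) ^ d * (s.map fun μ => x⁻¹ - μ).prod
        = s.prod * (s.map fun μ => x - μ⁻¹).prod := by
      have hc : (-x) ^ d = (s.map fun _ => -x).prod := by
        rw [Multiset.map_const', Multiset.prod_replicate, hcard]
      have h2 : s.prod = (s.map fun μ => μ).prod := by rw [Multiset.map_id']
      rw [hc, ← Multiset.prod_map_mul, h2, ← Multiset.prod_map_mul]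
      refine congrArg Multiset.prod (Multiset.map_congr rfl ?_)
      intro μ hμ
      have h3 := hne μ hμ
      field_simp
      ring
    have e4 : (((s.map (starRingEnd ℂ)).map fun a => X - C a).prod).eval x
        = (s.map fun μ => x - μ⁻¹).prod := by
      rw [eval_multiset_prod, Multiset.map_map, Multiset.map_map]
      simp only [Function.comp, eval_sub, eval_X, eval_C]
      exact congrArg _ (Multiset.map_congr rfl fun μ hμ => by rw [hconj μ hμ])
    apply mul_left_cancel₀ hdetA
    rw [e1, e2, e3, e4, ← hdet_prod]
  have htrB : B.trace = (s.map (starRingEnd ℂ)).sum := by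
    rw [B.trace_eq_sum_roots_charpoly, hq, roots_multiset_prod_X_sub_C]
  rw [htrB, A.trace_eq_sum_roots_charpoly, ← hs, map_multiset_sum]


variable {G : Type} [Group G] [Fintype G]

lemma char_eq_trace_mat (V : FDRep ℂ G) (g : G) :
    V.character g =
      (LinearMap.toMatrixAlgEquiv (Module.finBasis ℂ V) (V.ρ g)).trace := by
  rw [FDRep.character]
  exact LinearMap.trace_eq_matrix_trace ℂ (Module.finBasis ℂ V) (V.ρ g)

lemma mat_pow_eq_one (V : FDRep ℂ G) (g : G) :
    (LinearMap.toMatrixAlgEquiv (Module.finBasis ℂ V) (V.ρ g)) ^ orderOf g = 1 := by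
  rw [← map_pow, ← map_pow, pow_orderOf_eq_one, _root_.map_one, _root_.map_one]

lemma char_abs_le (V : FDRep ℂ G) (g : G) :
    ‖V.character g‖ ≤ ‖V.character 1‖ := by
  rw [char_eq_trace_mat, FDRep.char_one]
  have h := abs_trace_le (orderOf_pos g).ne' (mat_pow_eq_one V g)
  simpa using h

lemma char_conj_apply (V : FDRep ℂ G) (g : G) :
    (starRingEnd ℂ) (V.character g) = V.character g⁻¹ := by
  have hk : orderOf g ≠ 0 := (orderOf_pos g).ne'
  rw [char_eq_trace_mat, char_eq_trace_mat,
    conj_trace_eq hk (mat_pow_eq_one V g), ← map_pow, ← map_pow]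
  congr 2
  have h1 : g * g ^ (orderOf g - 1) = 1 := by
    rw [← pow_succ', Nat.sub_add_cancel (Nat.one_le_iff_ne_zero.mpr hk), pow_orderOf_eq_one]
  rw [inv_eq_of_mul_eq_one_right h1]


lemma sum_normSq_eq_card (V : FDRep ℂ G) [CategoryTheory.Simple V] :
    ∑ x : G, Complex.normSq (V.character x) = (Fintype.card G : ℝ) := by
  have h0 : (Fintype.card G : ℂ) ≠ 0 := Nat.cast_ne_zero.mpr Fintype.card_ne_zero
  letI : Invertible (Fintype.card G : ℂ) := invertibleOfNonzero h0
  letI : Invertible ((Nat.card G : ℂ)) := by rw [Nat.card_eq_fintype_card]; exact ‹_›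
  have h := FDRep.char_orthonormal V V
  rw [if_pos ⟨CategoryTheory.Iso.refl V⟩] at h
  have h2 : ∑ g : G, V.character g * V.character g⁻¹ = (Fintype.card G : ℂ) := by
    have h1 := congrArg (fun z => ((Nat.card G : ℂ)) * z) h
    simp only [Nat.card_eq_fintype_card] at h1
    simpa [← mul_assoc, mul_inv_cancel₀ h0] using h1
  have h3 : ∑ g : G, (Complex.normSq (V.character g) : ℂ) = (Fintype.card G : ℂ) := by
    rw [← h2]
    refine Finset.sum_congr rfl fun g _ => ?_
    rw [← char_conj_apply, Complex.mul_conj]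
  exact_mod_cast h3

end StmtAux

end StmtAux

open StmtAux in
theorem stmt2 {G : Type} [Group G] [Fintype G] (n : ℕ) (hn : 2 ≤ n)
    (χ : Fin n → G → ℂ) (hirr : ∀ i, IsIrrChar G (χ i)) (i₀ : Fin n)
    (hmax : ∀ i, ‖χ i 1‖ ≤ ‖χ i₀ 1‖) :
    ‖cInner G (∏ i, χ i) (∏ i, χ i)‖ ≤
      ∏ i ∈ Finset.univ.erase i₀, Complex.normSq (χ i 1) := by
  choose V hsim hchar using hirr
  haveI : CategoryTheory.Simple (V i₀) := hsim i₀
  have hcard0 : (0:ℝ) < (Fintype.card G : ℝ) := by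
    exact_mod_cast Fintype.card_pos
  set K : ℝ := ∏ i ∈ Finset.univ.erase i₀, Complex.normSq (χ i 1) with hK
  have hKnonneg : 0 ≤ K := Finset.prod_nonneg fun i _ => Complex.normSq_nonneg _
  have key : ∀ (i : Fin n) (x : G), Complex.normSq (χ i x) ≤ Complex.normSq (χ i 1) := by
    intro i x
    rw [← hchar i, Complex.normSq_eq_norm_sq, Complex.normSq_eq_norm_sq]
    exact pow_le_pow_left₀ (norm_nonneg _) (char_abs_le (V i) x) 2
  have horth : ∑ x : G, Complex.normSq (χ i₀ x) = (Fintype.card G : ℝ) := by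
    rw [← hchar i₀]; exact sum_normSq_eq_card (V i₀)
  have hc : cInner G (∏ i, χ i) (∏ i, χ i)
      = (((Fintype.card G : ℝ)⁻¹ * ∑ x : G, Complex.normSq (∏ i, χ i x) : ℝ) : ℂ) := by
    rw [cInner, Complex.ofReal_mul, Complex.ofReal_inv, Complex.ofReal_natCast]
    congr 1
    rw [Complex.ofReal_sum]
    refine Finset.sum_congr rfl fun x _ => ?_
    rw [Finset.prod_apply, Complex.mul_conj]
  have hsum_nonneg : 0 ≤ (Fintype.card G : ℝ)⁻¹ * ∑ x : G, Complex.normSq (∏ i, χ i x) := by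
    apply mul_nonneg (by positivity)
    exact Finset.sum_nonneg fun x _ => Complex.normSq_nonneg _
  rw [hc, Complex.norm_real, Real.norm_eq_abs, abs_of_nonneg hsum_nonneg]
  have hbound : ∑ x : G, Complex.normSq (∏ i, χ i x)
      ≤ ∑ x : G, Complex.normSq (χ i₀ x) * K := by
    refine Finset.sum_le_sum fun x _ => ?_
    rw [map_prod Complex.normSq, ← Finset.mul_prod_erase Finset.univ _ (Finset.mem_univ i₀)]
    refine mul_le_mul_of_nonneg_left ?_ (Complex.normSq_nonneg _)
    refine Finset.prod_le_prod (fun i _ => Complex.normSq_nonneg _) fun i _ => key i x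
  calc (Fintype.card G : ℝ)⁻¹ * ∑ x : G, Complex.normSq (∏ i, χ i x)
      ≤ (Fintype.card G : ℝ)⁻¹ * ∑ x : G, Complex.normSq (χ i₀ x) * K := by
        exact mul_le_mul_of_nonneg_left hbound (by positivity)
    _ = K := by
        rw [← Finset.sum_mul, horth]
        field_simp
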